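/- For b > 0 and any two data vectors x, x', the supremum over all z ∈ ℝ of the density ratio f_{Z_b|x}(z)/f_{Z_b|x'}(z) is attained on the finite set T̂ = {t̂(x'',s) : s ⊆ U, p(s) > 0, x'' ∈ {x, x'}}: sup_{z∈ℝ} f_{Z_b|x}(z)/f_{Z_b|x'}(z) = max_{z ∈ T̂} f_{Z_b|x}(z)/f_{Z_b|x'}(z). -/

import Mathlib

attribute [local instance] Classical.propDecidable

noncomputable section

/-- First-order inclusion probability `p_i = ∑_{s ∋ i} p(s)`. -/
def incl {U : Type*} [Fintype U] (p : Finset U → ℝ) (i : U) : ℝ :=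
  ∑ s ∈ Finset.univ.filter (fun s : Finset U => i ∈ s), p s

/-- Horvitz–Thompson estimator `t̂(x,s) = ∑_{i ∈ s} x_i / p_i`. -/
def tHat {U : Type*} [Fintype U] (p : Finset U → ℝ) (x : U → ℝ) (s : Finset U) : ℝ :=
  ∑ i ∈ s, x i / incl p i

/-- Density of the Laplace-perturbed Horvitz–Thompson mechanism `Z_b = t̂(x,S) + bW`. -/
def fZb {U : Type*} [Fintype U] (p : Finset U → ℝ) (b : ℝ) (x : U → ℝ) (z : ℝ) : ℝ :=
  ∑ s : Finset U, p s * ((2 * b)⁻¹ * Real.exp (-|z - tHat p x s| / b))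

/-- The finite knot set `T̂ = {t̂(x'',s) : s ⊆ U, p(s) > 0, x'' ∈ {x, x'}}`. -/
def knots {U : Type*} [Fintype U] (p : Finset U → ℝ) (x x' : U → ℝ) : Finset ℝ :=
  ((Finset.univ.filter (fun s : Finset U => 0 < p s)).image (tHat p x)) ∪
    ((Finset.univ.filter (fun s : Finset U => 0 < p s)).image (tHat p x'))

section Aux

variable {U : Type*} [Fintype U]

lemma mem_knots_left (p : Finset U → ℝ) (x x' : U → ℝ) (s : Finset U) (hs : 0 < p s) :
    tHat p x s ∈ knots p x x' :=
  Finset.mem_union_left _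
    (Finset.mem_image.2 ⟨s, Finset.mem_filter.2 ⟨Finset.mem_univ _, hs⟩, rfl⟩)

lemma mem_knots_right (p : Finset U → ℝ) (x x' : U → ℝ) (s : Finset U) (hs : 0 < p s) :
    tHat p x s ∈ knots p x' x :=
  Finset.mem_union_right _
    (Finset.mem_image.2 ⟨s, Finset.mem_filter.2 ⟨Finset.mem_univ _, hs⟩, rfl⟩)

lemma fZb_pos (p : Finset U → ℝ) (hp : ∀ s, 0 ≤ p s) (b : ℝ) (hb : 0 < b)
    (y : U → ℝ) (z : ℝ) (hex : ∃ s : Finset U, 0 < p s) : 0 < fZb p b y z := by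
  obtain ⟨s₀, hs₀⟩ := hex
  refine Finset.sum_pos' (fun s _ => ?_) ⟨s₀, Finset.mem_univ _, ?_⟩
  · exact mul_nonneg (hp s) (by positivity)
  · exact mul_pos hs₀ (by positivity)

/-- Representation on an interval free of knots:
`f(w)·e^{w/b} = A + B·e^{2w/b}` for `w ∈ [k₁, k₂]`. -/
lemma rep_mid (p : Finset U → ℝ) (hp : ∀ s, 0 ≤ p s) (b : ℝ) (hb : 0 < b)
    (y : U → ℝ) (k₁ k₂ : ℝ)
    (hsep : ∀ s : Finset U, 0 < p s → tHat p y s ≤ k₁ ∨ k₂ ≤ tHat p y s)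
    (w : ℝ) (hw1 : k₁ ≤ w) (hw2 : w ≤ k₂) :
    fZb p b y w * Real.exp (w / b) =
      (∑ s : Finset U, if tHat p y s ≤ k₁ then
          p s * ((2 * b)⁻¹ * Real.exp (tHat p y s / b)) else 0)
      + (∑ s : Finset U, if tHat p y s ≤ k₁ then 0 else
          p s * ((2 * b)⁻¹ * Real.exp (-tHat p y s / b)))
        * Real.exp (2 * w / b) := by
  have hb' : b ≠ 0 := ne_of_gt hb
  unfold fZb
  rw [Finset.sum_mul, Finset.sum_mul, ← Finset.sum_add_distrib]
  refine Finset.sum_congr rfl fun s _ => ?_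
  by_cases h : tHat p y s ≤ k₁
  · rw [if_pos h, if_pos h]
    have habs : |w - tHat p y s| = w - tHat p y s := abs_of_nonneg (by linarith)
    rw [habs]
    have he : Real.exp (-(w - tHat p y s) / b) * Real.exp (w / b)
        = Real.exp (tHat p y s / b) := by
      rw [← Real.exp_add]; congr 1; field_simp; ring
    linear_combination (p s * (2 * b)⁻¹) * he
  · rw [if_neg h, if_neg h]
    rcases (hp s).eq_or_lt with h0 | h0
    · simp [← h0]
    · have hk2 : k₂ ≤ tHat p y s := (hsep s h0).resolve_left h
      have habs : |w - tHat p y s| = tHat p y s - w := by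
        rw [abs_of_nonpos (by linarith)]; ring
      rw [habs]
      have he : Real.exp (-(tHat p y s - w) / b) * Real.exp (w / b)
          = Real.exp (-tHat p y s / b) * Real.exp (2 * w / b) := by
        rw [← Real.exp_add, ← Real.exp_add]; congr 1; field_simp; ring
      linear_combination (p s * (2 * b)⁻¹) * he

/-- Representation to the right of all knots: `f(w)·e^{w/b}` is constant in `w`. -/
lemma rep_right (p : Finset U → ℝ) (hp : ∀ s, 0 ≤ p s) (b : ℝ) (hb : 0 < b)
    (y : U → ℝ) (K : ℝ) (hsep : ∀ s : Finset U, 0 < p s → tHat p y s ≤ K)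
    (w : ℝ) (hw : K ≤ w) :
    fZb p b y w * Real.exp (w / b)
      = ∑ s : Finset U, p s * ((2 * b)⁻¹ * Real.exp (tHat p y s / b)) := by
  have hb' : b ≠ 0 := ne_of_gt hb
  unfold fZb
  rw [Finset.sum_mul]
  refine Finset.sum_congr rfl fun s _ => ?_
  rcases (hp s).eq_or_lt with h0 | h0
  · simp [← h0]
  · have hle : tHat p y s ≤ w := le_trans (hsep s h0) hw
    rw [abs_of_nonneg (by linarith)]
    have he : Real.exp (-(w - tHat p y s) / b) * Real.exp (w / b)
        = Real.exp (tHat p y s / b) := by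
      rw [← Real.exp_add]; congr 1; field_simp; ring
    linear_combination (p s * (2 * b)⁻¹) * he

/-- Representation to the left of all knots: `f(w)·e^{-w/b}` is constant in `w`. -/
lemma rep_left (p : Finset U → ℝ) (hp : ∀ s, 0 ≤ p s) (b : ℝ) (hb : 0 < b)
    (y : U → ℝ) (K : ℝ) (hsep : ∀ s : Finset U, 0 < p s → K ≤ tHat p y s)
    (w : ℝ) (hw : w ≤ K) :
    fZb p b y w * Real.exp (-(w / b))
      = ∑ s : Finset U, p s * ((2 * b)⁻¹ * Real.exp (-tHat p y s / b)) := by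
  have hb' : b ≠ 0 := ne_of_gt hb
  unfold fZb
  rw [Finset.sum_mul]
  refine Finset.sum_congr rfl fun s _ => ?_
  rcases (hp s).eq_or_lt with h0 | h0
  · simp [← h0]
  · have hle : w ≤ tHat p y s := le_trans hw (hsep s h0)
    have habs : |w - tHat p y s| = tHat p y s - w := by
      rw [abs_of_nonpos (by linarith)]; ring
    rw [habs]
    have he : Real.exp (-(tHat p y s - w) / b) * Real.exp (-(w / b))
        = Real.exp (-tHat p y s / b) := by
      rw [← Real.exp_add]; congr 1; field_simp; ring
    linear_combination (p s * (2 * b)⁻¹) * he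

/-- Mediant-type inequality: a Möbius function with positive denominators on an
interval is bounded by its values at the endpoints. -/
lemma mediant (A B A' B' u u₁ u₂ : ℝ) (hu1 : u₁ ≤ u) (hu2 : u ≤ u₂)
    (hD : 0 < A' + B' * u) (hD1 : 0 < A' + B' * u₁) (hD2 : 0 < A' + B' * u₂) :
    (A + B * u) / (A' + B' * u) ≤
      max ((A + B * u₁) / (A' + B' * u₁)) ((A + B * u₂) / (A' + B' * u₂)) := by
  set M := max ((A + B * u₁) / (A' + B' * u₁)) ((A + B * u₂) / (A' + B' * u₂)) with hM
  have h1 : A + B * u₁ ≤ M * (A' + B' * u₁) :=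
    (div_le_iff₀ hD1).1 (le_max_left _ _)
  have h2 : A + B * u₂ ≤ M * (A' + B' * u₂) :=
    (div_le_iff₀ hD2).1 (le_max_right _ _)
  rw [div_le_iff₀ hD]
  rcases eq_or_lt_of_le (hu1.trans hu2) with he | hlt
  · have hu : u = u₁ := le_antisymm (he ▸ hu2) hu1
    rw [hu]; exact h1
  · have e1 := mul_le_mul_of_nonneg_left h1 (sub_nonneg.2 hu2)
    have e2 := mul_le_mul_of_nonneg_left h2 (sub_nonneg.2 hu1)
    have hpos : 0 < u₂ - u₁ := sub_pos.2 hlt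
    nlinarith [e1, e2]

/-- Core estimate: on a knot-free interval `[k₁, k₂]` the ratio is bounded by
its values at the endpoints. -/
lemma core (p : Finset U → ℝ) (hp : ∀ s, 0 ≤ p s) (b : ℝ) (hb : 0 < b)
    (x x' : U → ℝ) (k₁ k₂ z : ℝ) (h1 : k₁ ≤ z) (h2 : z ≤ k₂)
    (hsx : ∀ s : Finset U, 0 < p s → tHat p x s ≤ k₁ ∨ k₂ ≤ tHat p x s)
    (hsx' : ∀ s : Finset U, 0 < p s → tHat p x' s ≤ k₁ ∨ k₂ ≤ tHat p x' s)
    (hg : ∀ w, 0 < fZb p b x' w) :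
    fZb p b x z / fZb p b x' z ≤
      max (fZb p b x k₁ / fZb p b x' k₁) (fZb p b x k₂ / fZb p b x' k₂) := by
  have hk12 : k₁ ≤ k₂ := h1.trans h2
  have ex1 := rep_mid p hp b hb x k₁ k₂ hsx
  have ex2 := rep_mid p hp b hb x' k₁ k₂ hsx'
  have hratio : ∀ w : ℝ, fZb p b x w / fZb p b x' w
      = (fZb p b x w * Real.exp (w / b)) / (fZb p b x' w * Real.exp (w / b)) :=
    fun w => (mul_div_mul_right _ _ (Real.exp_ne_zero _)).symm
  have hDpos : ∀ w : ℝ, 0 < fZb p b x' w * Real.exp (w / b) :=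
    fun w => mul_pos (hg w) (Real.exp_pos _)
  have d1 := hDpos k₁; have d2 := hDpos k₂; have dz := hDpos z
  rw [ex2 k₁ le_rfl hk12] at d1
  rw [ex2 k₂ hk12 le_rfl] at d2
  rw [ex2 z h1 h2] at dz
  rw [hratio z, hratio k₁, hratio k₂,
    ex1 z h1 h2, ex2 z h1 h2, ex1 k₁ le_rfl hk12, ex2 k₁ le_rfl hk12,
    ex1 k₂ hk12 le_rfl, ex2 k₂ hk12 le_rfl]
  refine mediant _ _ _ _ _ _ _ ?_ ?_ dz d1 d2
  · exact Real.exp_le_exp.2 (by gcongr)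
  · exact Real.exp_le_exp.2 (by gcongr)

/-- To the right of all knots the ratio is constant. -/
lemma outer_right_eq (p : Finset U → ℝ) (hp : ∀ s, 0 ≤ p s) (b : ℝ) (hb : 0 < b)
    (x x' : U → ℝ) (K : ℝ)
    (hsx : ∀ s : Finset U, 0 < p s → tHat p x s ≤ K)
    (hsx' : ∀ s : Finset U, 0 < p s → tHat p x' s ≤ K)
    (z : ℝ) (hz : K ≤ z) :
    fZb p b x z / fZb p b x' z = fZb p b x K / fZb p b x' K := by
  have e1 := rep_right p hp b hb x K hsx z hz
  have e2 := rep_right p hp b hb x' K hsx' z hz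
  have e3 := rep_right p hp b hb x K hsx K le_rfl
  have e4 := rep_right p hp b hb x' K hsx' K le_rfl
  calc fZb p b x z / fZb p b x' z
      = (fZb p b x z * Real.exp (z / b)) / (fZb p b x' z * Real.exp (z / b)) :=
        (mul_div_mul_right _ _ (Real.exp_ne_zero _)).symm
    _ = (fZb p b x K * Real.exp (K / b)) / (fZb p b x' K * Real.exp (K / b)) := by
        rw [e1, e2, e3, e4]
    _ = fZb p b x K / fZb p b x' K := mul_div_mul_right _ _ (Real.exp_ne_zero _)

/-- To the left of all knots the ratio is constant. -/
lemma outer_left_eq (p : Finset U → ℝ) (hp : ∀ s, 0 ≤ p s) (b : ℝ) (hb : 0 < b)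
    (x x' : U → ℝ) (K : ℝ)
    (hsx : ∀ s : Finset U, 0 < p s → K ≤ tHat p x s)
    (hsx' : ∀ s : Finset U, 0 < p s → K ≤ tHat p x' s)
    (z : ℝ) (hz : z ≤ K) :
    fZb p b x z / fZb p b x' z = fZb p b x K / fZb p b x' K := by
  have e1 := rep_left p hp b hb x K hsx z hz
  have e2 := rep_left p hp b hb x' K hsx' z hz
  have e3 := rep_left p hp b hb x K hsx K le_rfl
  have e4 := rep_left p hp b hb x' K hsx' K le_rfl
  calc fZb p b x z / fZb p b x' z
      = (fZb p b x z * Real.exp (-(z / b))) / (fZb p b x' z * Real.exp (-(z / b))) :=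
        (mul_div_mul_right _ _ (Real.exp_ne_zero _)).symm
    _ = (fZb p b x K * Real.exp (-(K / b))) / (fZb p b x' K * Real.exp (-(K / b))) := by
        rw [e1, e2, e3, e4]
    _ = fZb p b x K / fZb p b x' K := mul_div_mul_right _ _ (Real.exp_ne_zero _)

end Aux

/-- The supremum over `z ∈ ℝ` of the density ratio `f_{Z_b|x}/f_{Z_b|x'}` is
attained at a point of the finite knot set `T̂`. -/
theorem fZb_ratio_sup_attained_on_knots {U : Type*} [Fintype U]
    (p : Finset U → ℝ) (hp : ∀ s, 0 ≤ p s) (hsum : ∑ s : Finset U, p s = 1)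
    (hpos : ∀ i : U, 0 < incl p i) (b : ℝ) (hb : 0 < b) (x x' : U → ℝ) :
    ∃ z₀ ∈ knots p x x', ∀ z : ℝ,
      fZb p b x z / fZb p b x' z ≤ fZb p b x z₀ / fZb p b x' z₀ := by
  have hex : ∃ s : Finset U, 0 < p s := by
    by_contra h
    push_neg at h
    have hz : ∑ s : Finset U, p s = 0 :=
      Finset.sum_eq_zero fun s _ => le_antisymm (h s) (hp s)
    rw [hz] at hsum; norm_num at hsum
  have hg : ∀ w, 0 < fZb p b x' w := fun w => fZb_pos p hp b hb x' w hex
  have hne : (knots p x x').Nonempty := by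
    obtain ⟨s₀, hs₀⟩ := hex
    exact ⟨tHat p x s₀, mem_knots_left p x x' s₀ hs₀⟩
  obtain ⟨z₀, hz₀, hmax⟩ :=
    Finset.exists_max_image (knots p x x') (fun k => fZb p b x k / fZb p b x' k) hne
  refine ⟨z₀, hz₀, fun z => ?_⟩
  suffices h : ∃ k ∈ knots p x x',
      fZb p b x z / fZb p b x' z ≤ fZb p b x k / fZb p b x' k by
    obtain ⟨k, hk, hle⟩ := h
    exact hle.trans (hmax k hk)
  by_cases hzK : (knots p x x').max' hne ≤ z
  · refine ⟨(knots p x x').max' hne, Finset.max'_mem _ _, le_of_eq ?_⟩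
    exact outer_right_eq p hp b hb x x' _
      (fun s hs => Finset.le_max' _ _ (mem_knots_left p x x' s hs))
      (fun s hs => Finset.le_max' _ _ (mem_knots_right p x' x s hs)) z hzK
  by_cases hzm : z ≤ (knots p x x').min' hne
  · refine ⟨(knots p x x').min' hne, Finset.min'_mem _ _, le_of_eq ?_⟩
    exact outer_left_eq p hp b hb x x' _
      (fun s hs => Finset.min'_le _ _ (mem_knots_left p x x' s hs))
      (fun s hs => Finset.min'_le _ _ (mem_knots_right p x' x s hs)) z hzm
  push_neg at hzK hzm
  have hne₁ : ((knots p x x').filter (fun t => t ≤ z)).Nonempty :=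
    ⟨(knots p x x').min' hne, Finset.mem_filter.2 ⟨Finset.min'_mem _ _, hzm.le⟩⟩
  have hne₂ : ((knots p x x').filter (fun t => z ≤ t)).Nonempty :=
    ⟨(knots p x x').max' hne, Finset.mem_filter.2 ⟨Finset.max'_mem _ _, hzK.le⟩⟩
  set k₁ := ((knots p x x').filter (fun t => t ≤ z)).max' hne₁ with hk₁def
  set k₂ := ((knots p x x').filter (fun t => z ≤ t)).min' hne₂ with hk₂def
  have hk₁mem := Finset.mem_filter.1 (Finset.max'_mem _ hne₁)
  have hk₂mem := Finset.mem_filter.1 (Finset.min'_mem _ hne₂)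
  have hsep : ∀ t ∈ knots p x x', t ≤ k₁ ∨ k₂ ≤ t := by
    intro t ht
    rcases le_total t z with h | h
    · exact Or.inl (Finset.le_max' ((knots p x x').filter (fun t => t ≤ z)) t
        (Finset.mem_filter.2 ⟨ht, h⟩))
    · exact Or.inr (Finset.min'_le ((knots p x x').filter (fun t => z ≤ t)) t
        (Finset.mem_filter.2 ⟨ht, h⟩))
  have hcore := core p hp b hb x x' k₁ k₂ z hk₁mem.2 hk₂mem.2
    (fun s hs => hsep _ (mem_knots_left p x x' s hs))
    (fun s hs => hsep _ (mem_knots_right p x' x s hs)) hg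
  rcases le_total (fZb p b x k₁ / fZb p b x' k₁) (fZb p b x k₂ / fZb p b x' k₂) with h | h
  · exact ⟨k₂, hk₂mem.1, hcore.trans_eq (max_eq_right h)⟩
  · exact ⟨k₁, hk₁mem.1, hcore.trans_eq (max_eq_left h)⟩
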